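/- For every α ∈ ℝ and every p ∈ (0,1] there exists a constant C > 0 (depending only on α and p) such that for every integer N ≥ 1, if Z is a binomial random variable with parameters N and p, then 𝔼[(1+Z)^α] ≤ C·(N·p)^α. -/

import Mathlib

-- ℕ factorial bounds
lemma fact_add_le (k m : ℕ) : (k+m).factorial ≤ m^m * (k+1)^m * k.factorial := by
  induction m with
  | zero => simp
  | succ m ih =>
    have h1 : (k + (m+1)).factorial = (k+m+1) * (k+m).factorial := by
      rw [show k + (m+1) = (k+m)+1 from rfl, Nat.factorial_succ]
    rw [h1]
    calc (k+m+1) * (k+m).factorial ≤ ((m+1)*(k+1)) * (m^m * (k+1)^m * k.factorial) := by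
          have hmk : (m+1)*(k+1) = m*k + m + k + 1 := by ring
          exact Nat.mul_le_mul (by omega) ih
      _ ≤ ((m+1)*(k+1)) * ((m+1)^m * (k+1)^m * k.factorial) := by
          exact Nat.mul_le_mul_left _ (Nat.mul_le_mul_right _ (Nat.mul_le_mul_right _ (Nat.pow_le_pow_left (by omega) m)))
      _ = (m+1)^(m+1) * (k+1)^(m+1) * k.factorial := by ring

lemma pow_mul_fact_le (N m : ℕ) : N^m * N.factorial ≤ (N+m).factorial := by
  induction m with
  | zero => simp
  | succ m ih =>
    have : (N + (m+1)).factorial = (N+m+1) * (N+m).factorial := by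
      rw [show N + (m+1) = (N+m)+1 from rfl, Nat.factorial_succ]
    rw [this]
    calc N^(m+1) * N.factorial = N * (N^m * N.factorial) := by ring
      _ ≤ (N+m+1) * (N+m).factorial := Nat.mul_le_mul (by omega) ih

-- choose identity
lemma choose_id (N m k : ℕ) (hk : k ≤ N) :
    N.choose k * k.factorial * (N+m).factorial
      = (N+m).choose (k+m) * (k+m).factorial * N.factorial := by
  have hA := Nat.choose_mul_factorial_mul_factorial hk
  have hB := Nat.choose_mul_factorial_mul_factorial (show k+m ≤ N+m by omega)
  have hNk : (N+m) - (k+m) = N - k := by omega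
  rw [hNk] at hB
  have hpos : 0 < (N-k).factorial := Nat.factorial_pos _
  apply Nat.eq_of_mul_eq_mul_right hpos
  calc N.choose k * k.factorial * (N+m).factorial * (N-k).factorial
      = (N.choose k * k.factorial * (N-k).factorial) * (N+m).factorial := by ring
    _ = N.factorial * (N+m).factorial := by rw [hA]
    _ = ((N+m).choose (k+m) * (k+m).factorial * (N-k).factorial) * N.factorial := by rw [hB]; ring
    _ = (N+m).choose (k+m) * (k+m).factorial * N.factorial * (N-k).factorial := by ring

lemma binom_total (p : ℝ) (n : ℕ) :
    ∑ j ∈ Finset.range (n+1), (n.choose j : ℝ) * p^j * (1-p)^(n-j) = 1 := by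
  have h := add_pow p (1-p) n
  simp only [show p + (1-p) = 1 by ring, one_pow] at h
  calc ∑ j ∈ Finset.range (n+1), (n.choose j : ℝ) * p^j * (1-p)^(n-j)
      = ∑ j ∈ Finset.range (n+1), p^j * (1-p)^(n-j) * (n.choose j : ℝ) :=
        Finset.sum_congr rfl fun j _ => by ring
    _ = 1 := h.symm

lemma key_sum (p : ℝ) (hp0 : 0 < p) (hp1 : p ≤ 1) (N m : ℕ) :
    ∑ k ∈ Finset.range (N+1),
        ((N.choose k : ℝ) * p^k * (1-p)^(N-k)) * (k.factorial / (k+m).factorial)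
      ≤ ((N.factorial : ℝ) / (N+m).factorial) / p^m := by
  have hq : (0:ℝ) ≤ 1 - p := by linarith
  set g : ℕ → ℝ := fun j => ((N+m).choose j : ℝ) * p^j * (1-p)^((N+m)-j) with hg
  have hgnn : ∀ j, 0 ≤ g j := fun j => by
    apply mul_nonneg (mul_nonneg (by positivity) (by positivity)) (by positivity)
  have hterm : ∀ k ∈ Finset.range (N+1),
      ((N.choose k : ℝ) * p^k * (1-p)^(N-k)) * (k.factorial / (k+m).factorial)
        = ((N.factorial : ℝ) / (N+m).factorial) / p^m * g (k+m) := by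
    intro k hk
    have hk' : k ≤ N := Nat.lt_succ_iff.mp (Finset.mem_range.mp hk)
    have hid : (N.choose k : ℝ) * k.factorial * (N+m).factorial
        = ((N+m).choose (k+m) : ℝ) * (k+m).factorial * N.factorial := by
      exact_mod_cast congrArg (Nat.cast : ℕ → ℝ) (choose_id N m k hk')
    have hNk : (N+m) - (k+m) = N - k := by omega
    have hfk : (0:ℝ) < (k+m).factorial := by exact_mod_cast Nat.factorial_pos _
    have hfN : (0:ℝ) < (N+m).factorial := by exact_mod_cast Nat.factorial_pos _
    have h2 : (N.choose k : ℝ) * k.factorial / (k+m).factorial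
        = ((N+m).choose (k+m) : ℝ) * N.factorial / (N+m).factorial := by
      rw [div_eq_div_iff hfk.ne' hfN.ne']; linear_combination hid
    have hpm : p^m ≠ 0 := by positivity
    simp only [hg, hNk, pow_add]
    calc ((N.choose k : ℝ) * p^k * (1-p)^(N-k)) * (k.factorial / (k+m).factorial)
        = ((N.choose k : ℝ) * k.factorial / (k+m).factorial) * (p^k * (1-p)^(N-k)) := by ring
      _ = (((N+m).choose (k+m) : ℝ) * N.factorial / (N+m).factorial) * (p^k * (1-p)^(N-k)) := by
          rw [h2]
      _ = ((N.factorial : ℝ) / (N+m).factorial) / p^m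
            * (((N+m).choose (k+m) : ℝ) * (p^k * p^m) * (1-p)^(N-k)) := by
          field_simp
  rw [Finset.sum_congr rfl hterm, ← Finset.mul_sum]
  have hsub : ∑ k ∈ Finset.range (N+1), g (k+m) ≤ 1 := by
    have himg : ∑ k ∈ Finset.range (N+1), g (k+m)
        = ∑ j ∈ (Finset.range (N+1)).image (· + m), g j := by
      rw [Finset.sum_image (by intros a _ b _ h; exact Nat.add_right_cancel h)]
    rw [himg]
    have := binom_total p (N+m)
    calc ∑ j ∈ (Finset.range (N+1)).image (· + m), g j
        ≤ ∑ j ∈ Finset.range (N+m+1), g j := by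
          apply Finset.sum_le_sum_of_subset_of_nonneg
          · intro j hj
            simp only [Finset.mem_image, Finset.mem_range] at hj ⊢
            obtain ⟨k, hk, rfl⟩ := hj; omega
          · intros; exact hgnn _
      _ = 1 := by rw [show N+m+1 = (N+m)+1 from rfl]; exact binom_total p (N+m)
  calc ((N.factorial : ℝ) / (N+m).factorial) / p^m * ∑ k ∈ Finset.range (N+1), g (k+m)
      ≤ ((N.factorial : ℝ) / (N+m).factorial) / p^m * 1 := by
        apply mul_le_mul_of_nonneg_left hsub
        positivity
    _ = _ := mul_one _

theorem stmt_11 (α p : ℝ) (hp : p ∈ Set.Ioc (0:ℝ) 1) :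
    ∃ C > 0, ∀ N : ℕ, 1 ≤ N →
      ∑ k ∈ Finset.range (N + 1),
          ((N.choose k : ℝ) * p ^ k * (1 - p) ^ (N - k)) * (1 + (k : ℝ)) ^ α
        ≤ C * ((N : ℝ) * p) ^ α := by
  obtain ⟨hp0, hp1⟩ := hp
  have hq : (0:ℝ) ≤ 1 - p := by linarith
  by_cases hα : 0 ≤ α
  · refine ⟨(2/p)^α, Real.rpow_pos_of_pos (by positivity) α, fun N hN => ?_⟩
    have hN0 : (0:ℝ) < N := by exact_mod_cast hN
    have hbd : ∀ k ∈ Finset.range (N+1),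
        ((N.choose k : ℝ) * p ^ k * (1 - p) ^ (N - k)) * (1 + (k : ℝ)) ^ α
          ≤ ((N.choose k : ℝ) * p ^ k * (1 - p) ^ (N - k)) * (2*N) ^ α := by
      intro k hk
      have hk' : k ≤ N := Nat.lt_succ_iff.mp (Finset.mem_range.mp hk)
      apply mul_le_mul_of_nonneg_left _ (by positivity)
      apply Real.rpow_le_rpow (by positivity) _ hα
      have : (k:ℝ) ≤ N := by exact_mod_cast hk'
      have hN1 : (1:ℝ) ≤ N := by exact_mod_cast hN
      linarith
    calc ∑ k ∈ Finset.range (N + 1),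
          ((N.choose k : ℝ) * p ^ k * (1 - p) ^ (N - k)) * (1 + (k : ℝ)) ^ α
        ≤ ∑ k ∈ Finset.range (N + 1),
          ((N.choose k : ℝ) * p ^ k * (1 - p) ^ (N - k)) * (2*N) ^ α :=
          Finset.sum_le_sum hbd
      _ = (2*(N:ℝ)) ^ α := by rw [← Finset.sum_mul, binom_total p N, one_mul]
      _ = (2/p)^α * ((N:ℝ)*p)^α := by
          rw [← Real.mul_rpow (by positivity) (by positivity)]
          congr 1
          field_simp
  · push_neg at hα
    set m : ℕ := ⌈-α⌉₊ with hm
    have hm1 : 1 ≤ m := Nat.one_le_iff_ne_zero.mpr (by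
      simp only [hm, ne_eq, Nat.ceil_eq_zero, not_le]; linarith)
    have hmα : -α ≤ m := Nat.le_ceil _
    have hθ : 0 ≤ α + (m:ℝ) := by linarith
    refine ⟨2^(α+(m:ℝ)) * (m:ℝ)^m * p^(-(m:ℝ)-α), by positivity, fun N hN => ?_⟩
    have hN0 : (0:ℝ) < N := by exact_mod_cast hN
    have hbd : ∀ k ∈ Finset.range (N+1),
        ((N.choose k : ℝ) * p ^ k * (1 - p) ^ (N - k)) * (1 + (k : ℝ)) ^ α
          ≤ (2*(N:ℝ))^(α+(m:ℝ)) * (m:ℝ)^m *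
              (((N.choose k : ℝ) * p ^ k * (1 - p) ^ (N - k)) *
                ((k.factorial : ℝ) / (k+m).factorial)) := by
      intro k hk
      have hk' : k ≤ N := Nat.lt_succ_iff.mp (Finset.mem_range.mp hk)
      have h1k : (0:ℝ) < 1 + k := by positivity
      have hkey : (1 + (k:ℝ)) ^ α ≤ (2*(N:ℝ))^(α+(m:ℝ)) * (m:ℝ)^m *
          ((k.factorial : ℝ) / (k+m).factorial) := by
        have e : (1 + (k:ℝ)) ^ α = (1+(k:ℝ))^(α+(m:ℝ)) * ((1+(k:ℝ))^(m:ℕ))⁻¹ := by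
          rw [← Real.rpow_natCast (1+(k:ℝ)) m, ← Real.rpow_neg h1k.le,
            ← Real.rpow_add h1k]
          ring_nf
        rw [e]
        have h1 : (1+(k:ℝ))^(α+(m:ℝ)) ≤ (2*(N:ℝ))^(α+(m:ℝ)) := by
          apply Real.rpow_le_rpow h1k.le _ hθ
          have : (k:ℝ) ≤ N := by exact_mod_cast hk'
          have hN1 : (1:ℝ) ≤ N := by exact_mod_cast hN
          linarith
        have h2 : ((1+(k:ℝ))^(m:ℕ))⁻¹ ≤ (m:ℝ)^m * ((k.factorial : ℝ) / (k+m).factorial) := by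
          have hineq : ((k+m).factorial : ℝ) ≤ (m:ℝ)^m * (1+(k:ℝ))^m * k.factorial := by
            calc ((k+m).factorial : ℝ) ≤ ((m^m * (k+1)^m * k.factorial : ℕ) : ℝ) := by
                  exact_mod_cast fact_add_le k m
              _ = (m:ℝ)^m * (1+(k:ℝ))^m * k.factorial := by push_cast; ring
          rw [inv_le_iff_one_le_mul₀ (by positivity),
            show (m:ℝ)^m * ((k.factorial:ℝ)/(k+m).factorial) * (1+(k:ℝ))^m
              = ((m:ℝ)^m * k.factorial * (1+(k:ℝ))^m)/((k+m).factorial) from by ring,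
            le_div_iff₀ (by positivity : (0:ℝ) < ((k+m).factorial:ℝ)), one_mul]
          exact hineq.trans_eq (by ring)
        calc (1+(k:ℝ))^(α+(m:ℝ)) * ((1+(k:ℝ))^(m:ℕ))⁻¹
            ≤ (2*(N:ℝ))^(α+(m:ℝ)) * ((m:ℝ)^m * ((k.factorial : ℝ) / (k+m).factorial)) := by
              apply mul_le_mul h1 h2 (by positivity) (by positivity)
          _ = (2*(N:ℝ))^(α+(m:ℝ)) * (m:ℝ)^m * ((k.factorial : ℝ) / (k+m).factorial) := by ring
      calc ((N.choose k : ℝ) * p ^ k * (1 - p) ^ (N - k)) * (1 + (k : ℝ)) ^ α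
          ≤ ((N.choose k : ℝ) * p ^ k * (1 - p) ^ (N - k)) *
              ((2*(N:ℝ))^(α+(m:ℝ)) * (m:ℝ)^m * ((k.factorial : ℝ) / (k+m).factorial)) :=
            mul_le_mul_of_nonneg_left hkey (by positivity)
        _ = _ := by ring
    have hfac : ((N.factorial : ℝ) / (N+m).factorial) ≤ ((N:ℝ)^m)⁻¹ := by
      rw [div_le_iff₀ (by positivity : (0:ℝ) < ((N+m).factorial:ℝ)), inv_mul_eq_div,
        le_div_iff₀ (by positivity : (0:ℝ) < (N:ℝ)^m)]
      calc (N.factorial:ℝ) * (N:ℝ)^m = ((N^m * N.factorial : ℕ) : ℝ) := by push_cast; ring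
        _ ≤ ((N+m).factorial : ℝ) := by exact_mod_cast pow_mul_fact_le N m
    calc ∑ k ∈ Finset.range (N + 1),
          ((N.choose k : ℝ) * p ^ k * (1 - p) ^ (N - k)) * (1 + (k : ℝ)) ^ α
        ≤ ∑ k ∈ Finset.range (N + 1), (2*(N:ℝ))^(α+(m:ℝ)) * (m:ℝ)^m *
            (((N.choose k : ℝ) * p ^ k * (1 - p) ^ (N - k)) *
              ((k.factorial : ℝ) / (k+m).factorial)) := Finset.sum_le_sum hbd
      _ = (2*(N:ℝ))^(α+(m:ℝ)) * (m:ℝ)^m *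
            ∑ k ∈ Finset.range (N + 1),
              ((N.choose k : ℝ) * p ^ k * (1 - p) ^ (N - k)) *
                ((k.factorial : ℝ) / (k+m).factorial) := by rw [Finset.mul_sum]
      _ ≤ (2*(N:ℝ))^(α+(m:ℝ)) * (m:ℝ)^m * (((N.factorial : ℝ) / (N+m).factorial) / p^m) := by
          apply mul_le_mul_of_nonneg_left (key_sum p hp0 hp1 N m) (by positivity)
      _ ≤ (2*(N:ℝ))^(α+(m:ℝ)) * (m:ℝ)^m * (((N:ℝ)^m)⁻¹ / p^m) := by
          apply mul_le_mul_of_nonneg_left _ (by positivity)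
          exact div_le_div_of_nonneg_right hfac (by positivity) |>.trans_eq rfl
      _ = 2^(α+(m:ℝ)) * (m:ℝ)^m * p^(-(m:ℝ)-α) * ((N:ℝ)*p)^α := by
          rw [Real.mul_rpow (by norm_num) hN0.le,
            Real.mul_rpow hN0.le hp0.le,
            Real.rpow_add hN0, Real.rpow_natCast,
            show -(m:ℝ)-α = -(m:ℝ) + (-α) from by ring,
            Real.rpow_add hp0, Real.rpow_neg hp0.le, Real.rpow_natCast,
            Real.rpow_neg hp0.le]
          have h1 : ((N:ℝ)^m) ≠ 0 := by positivity
          have h2 : (p^m) ≠ 0 := by positivity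
          have h3 : (N:ℝ)^α ≠ 0 := by positivity
          have h4 : p^α ≠ 0 := by
            have := Real.rpow_pos_of_pos hp0 α; positivity
          field_simp
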